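/- Define Ψ : [0,∞) × ℝ → ℝ by Ψ(t,x) = −(x − t/2 − t²)²/(1 + 4t) + t²/4 + t³/3. Then Ψ(0,x) = −x² for all x ∈ ℝ, and for every t > 0 and x ∈ ℝ, Ψ is differentiable with ∂t Ψ(t,x) = x + (∂x Ψ(t,x))². -/

import Mathlib

/-- The explicit moving quadratic profile of Section 6.1 of the paper. -/
noncomputable def Psi (t x : ℝ) : ℝ :=
  -(x - t / 2 - t ^ 2) ^ 2 / (1 + 4 * t) + t ^ 2 / 4 + t ^ 3 / 3

lemma psi_x_deriv (t x : ℝ) :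
    HasDerivAt (fun y => Psi t y) (-(2 * (x - t / 2 - t ^ 2) ^ 1) / (1 + 4 * t)) x := by
  have h : HasDerivAt (fun y : ℝ => -(y - t / 2 - t ^ 2) ^ 2 / (1 + 4 * t))
      (-(2 * (x - t / 2 - t ^ 2) ^ 1) / (1 + 4 * t)) x := by
    have h1 : HasDerivAt (fun y : ℝ => (y - t / 2 - t ^ 2) ^ 2)
        (2 * (x - t / 2 - t ^ 2) ^ 1 * 1) x := by
      have := ((hasDerivAt_id x).sub_const (t / 2)).sub_const (t ^ 2)
      simpa [Pi.pow_def] using this.pow 2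
    simpa using (h1.neg.div_const (1 + 4 * t))
  simpa [Psi] using (h.add_const (t ^ 2 / 4)).add_const (t ^ 3 / 3)

lemma psi_t_deriv (t x : ℝ) (ht : (0:ℝ) < t) :
    HasDerivAt (fun s => Psi s x)
      ((2 * (x - t / 2 - t ^ 2) ^ 1 * (1 / 2 + 2 * t) * (1 + 4 * t) -
        -(x - t / 2 - t ^ 2) ^ 2 * 4) / (1 + 4 * t) ^ 2 + t / 2 + t ^ 2) t := by
  have hne : (1 + 4 * t) ≠ 0 := by nlinarith
  have hb : HasDerivAt (fun s : ℝ => x - s / 2 - s ^ 2) (-(1 / 2) - 2 * t) t := by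
    have h1 : HasDerivAt (fun s : ℝ => s / 2) (1 / 2) t := by
      simpa using (hasDerivAt_id t).div_const 2
    have h2 : HasDerivAt (fun s : ℝ => s ^ 2) (2 * t ^ 1) t := (hasDerivAt_id t).pow 2 |>.congr_deriv (by simp [id_eq]; try ring)
    simpa [Pi.sub_def] using ((hasDerivAt_const t x).sub h1).sub (by simpa using h2)
  have hnum : HasDerivAt (fun s : ℝ => -(x - s / 2 - s ^ 2) ^ 2)
      (-(2 * (x - t / 2 - t ^ 2) ^ 1 * (-(1 / 2) - 2 * t))) t := (hb.pow 2).neg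
  have hden : HasDerivAt (fun s : ℝ => 1 + 4 * s) 4 t := by
    simpa [Pi.add_def] using (hasDerivAt_const t (1:ℝ)).add ((hasDerivAt_id t).const_mul 4)
  have hdiv := hnum.div hden hne
  have h2 : HasDerivAt (fun s : ℝ => s ^ 2 / 4) (t / 2) t := by
    have := ((hasDerivAt_id t).pow 2).div_const 4
    simpa using this.congr_deriv (by simp [id_eq]; try ring)
  have h3 : HasDerivAt (fun s : ℝ => s ^ 3 / 3) (t ^ 2) t := by
    have := ((hasDerivAt_id t).pow 3).div_const 3
    simpa using this.congr_deriv (by simp [id_eq]; try ring)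
  have := (hdiv.add h2).add h3
  refine this.congr_deriv ?_
  ring

/-- explicit solution in the analytical counterexample of Section 6.1
of the paper: `Ψ(t,x) = −(x − t/2 − t²)²/(1+4t) + t²/4 + t³/3` satisfies
`Ψ(0,x) = −x²` and solves `∂t Ψ = x + (∂x Ψ)²` for `t > 0`. -/
theorem explicit_solution_psi :
    (∀ x : ℝ, Psi 0 x = -x ^ 2) ∧
    ∀ t > (0 : ℝ), ∀ x : ℝ,
      DifferentiableAt ℝ (fun s => Psi s x) t ∧
      DifferentiableAt ℝ (fun y => Psi t y) x ∧
      deriv (fun s => Psi s x) t = x + (deriv (fun y => Psi t y) x) ^ 2 := by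
  constructor
  · intro x; simp [Psi]
  · intro t ht x
    have hne : (1 + 4 * t) ≠ 0 := by nlinarith
    have hx := psi_x_deriv t x
    have htd := psi_t_deriv t x ht
    refine ⟨htd.differentiableAt, hx.differentiableAt, ?_⟩
    rw [htd.deriv, hx.deriv]
    field_simp
    ring
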